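/- Let p be a prime, α ≥ 1, β ∈ ℕ, and let δ ∈ ℕ satisfy δ ≥ (β(p−1)+1)·p^{α−1}. Then for every x ∈ ℤ, p^β divides coChoose_{p^α}(δ, x) = Σ_{0 ≤ j ≤ δ, j ≡ x (mod p^α)} (−1)^j · C(δ, j), where C(δ,j) denotes the usual binomial coefficient. (This generalizes Fleck's divisibility relation.) -/

import Mathlib

/-- The co-monofract value `coChoose q d y = Σ_{0 ≤ j ≤ d, j ≡ y (mod q)} (−1)^j · C(d,j)`. -/
def coChoose (q d : ℕ) (y : ℤ) : ℤ :=
  ∑ j ∈ Finset.range (d + 1),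
    if (q : ℤ) ∣ ((j : ℤ) - y) then (-1) ^ j * (d.choose j : ℤ) else 0

open Finset AddMonoidAlgebra

lemma single_neg' {q : ℕ} (g : ZMod q) (a : ℤ) :
    (single g (-a) : AddMonoidAlgebra ℤ (ZMod q)) = - single g a :=
  eq_neg_of_add_eq_zero_left (by rw [← single_add]; simp)

lemma single_sub' {q : ℕ} (g : ZMod q) (a b : ℤ) :
    (single g a - single g b : AddMonoidAlgebra ℤ (ZMod q)) = single g (a - b) := by
  rw [sub_eq_iff_eq_add, ← single_add, sub_add_cancel]

lemma dvd_single' {q : ℕ} (n : ℕ) (g : ZMod q) (c : ℤ) (h : (n : ℤ) ∣ c) :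
    (n : AddMonoidAlgebra ℤ (ZMod q)) ∣ single g c := by
  obtain ⟨e, rfl⟩ := h
  exact ⟨single g e, by rw [natCast_def, single_mul_single, zero_add]⟩

lemma aux_expand {q : ℕ} (g : ZMod q) (d : ℕ) :
    ((1 : AddMonoidAlgebra ℤ (ZMod q)) - single g 1) ^ d
      = ∑ j ∈ Finset.range (d + 1),
          single (j • g) ((-1) ^ j * (d.choose j : ℤ)) := by
  have h1 : (1 : AddMonoidAlgebra ℤ (ZMod q)) - single g 1
      = single g (-1 : ℤ) + 1 := by
    rw [show (-1 : ℤ) = -(1:ℤ) by ring, single_neg', sub_eq_neg_add]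
  rw [h1, add_pow]
  refine Finset.sum_congr rfl fun j hj => ?_
  rw [one_pow, mul_one, single_pow, natCast_def, single_mul_single, add_zero]

lemma aux_coeff (q d : ℕ) (x : ℤ) :
    coChoose q d x
      = ((((1 : AddMonoidAlgebra ℤ (ZMod q)) - single (1 : ZMod q) (1:ℤ)) ^ d
          : AddMonoidAlgebra ℤ (ZMod q))).coeff ((x : ZMod q)) := by
  rw [aux_expand, AddMonoidAlgebra.coeff_sum, Finsupp.finset_sum_apply]
  refine Finset.sum_congr rfl fun j hj => ?_
  classical
  rw [AddMonoidAlgebra.coeff_single, Finsupp.single_apply]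
  have hiff : (j • (1 : ZMod q) = ((x : ℤ) : ZMod q)) ↔ (q : ℤ) ∣ ((j : ℤ) - x) := by
    rw [show j • (1 : ZMod q) = ((j : ℤ) : ZMod q) by push_cast; simp]
    rw [ZMod.intCast_eq_intCast_iff, Int.modEq_iff_dvd, dvd_sub_comm]
  rw [if_congr hiff rfl rfl]

lemma choose_sub_one_int (p : ℕ) (hp : p.Prime) :
    ∀ j, j < p → (p : ℤ) ∣ ((p-1).choose j : ℤ) - (-1) ^ j := by
  intro j
  induction j with
  | zero => simp
  | succ i ih =>
    intro hip
    have hi : i < p := Nat.lt_of_succ_lt hip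
    have hpascal : (p-1).choose i + (p-1).choose (i+1) = p.choose (i+1) := by
      rw [← Nat.choose_succ_succ]
      congr 1
      omega
    have hdvd : (p : ℤ) ∣ (p.choose (i+1) : ℤ) :=
      Int.natCast_dvd_natCast.mpr (hp.dvd_choose_self (Nat.succ_ne_zero i) hip)
    have hcast : ((p-1).choose (i+1) : ℤ)
        = (p.choose (i+1) : ℤ) - ((p-1).choose i : ℤ) := by
      have := congrArg (fun n : ℕ => (n : ℤ)) hpascal
      push_cast at this
      linarith
    have h2 := dvd_sub hdvd (ih hi)
    have : (p.choose (i+1) : ℤ) - (((p-1).choose i : ℤ) - (-1)^i)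
        = ((p-1).choose (i+1) : ℤ) - (-1)^(i+1) := by
      rw [hcast, pow_succ]; ring
    rwa [this] at h2

lemma aux_main (p : ℕ) (hp : p.Prime) (α : ℕ) (hα : 1 ≤ α) (β δ : ℕ)
    (hδ : (β * (p - 1) + 1) * p ^ (α - 1) ≤ δ) :
    ((p : AddMonoidAlgebra ℤ (ZMod (p ^ α)))) ^ β ∣
      ((1 : AddMonoidAlgebra ℤ (ZMod (p ^ α))) - single (1 : ZMod (p ^ α)) (1:ℤ)) ^ δ := by
  set q := p ^ α with hq
  set X : AddMonoidAlgebra ℤ (ZMod q) := single (1 : ZMod q) (1:ℤ) with hX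
  set t : AddMonoidAlgebra ℤ (ZMod q) := 1 - X with ht
  set M : ℕ := p ^ (α - 1) with hM
  set Y : AddMonoidAlgebra ℤ (ZMod q) := single ((M : ZMod q)) (1:ℤ) with hY
  set N : AddMonoidAlgebra ℤ (ZMod q) := ∑ k ∈ range p, Y ^ k with hN
  set s : AddMonoidAlgebra ℤ (ZMod q) := t ^ M with hs
  have hM1 : 1 ≤ M := Nat.one_le_pow _ _ hp.pos
  have hYk : ∀ k : ℕ, Y ^ k = single (((k * M : ℕ) : ZMod q)) (1:ℤ) := by
    intro k
    rw [hY, single_pow, one_pow, nsmul_eq_mul]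
    push_cast
    ring_nf
  have hYp : Y ^ p = 1 := by
    rw [hYk p, show p * M = q by rw [hq, hM, ← pow_succ']; congr 1; omega]
    rw [ZMod.natCast_self, one_def]
  have hNY : N * Y = N := by
    have h0 : N * (Y - 1) = 0 := by rw [hN, geom_sum_mul, hYp, sub_self]
    rw [mul_sub, mul_one, sub_eq_zero] at h0
    exact h0
  have hNYk : ∀ k : ℕ, N * Y ^ k = N := by
    intro k
    induction k with
    | zero => rw [pow_zero, mul_one]
    | succ i ih => rw [pow_succ, ← mul_assoc, ih, hNY]
  have hNN : N * N = (p : AddMonoidAlgebra ℤ (ZMod q)) * N := by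
    calc N * N = ∑ k ∈ range p, N * Y ^ k := by rw [hN, mul_sum]
    _ = ∑ _k ∈ range p, N := Finset.sum_congr rfl fun k _ => hNYk k
    _ = (p : AddMonoidAlgebra ℤ (ZMod q)) * N := by
        rw [Finset.sum_const, card_range, nsmul_eq_mul]
  have h1YN : (1 - Y) * N = 0 := by
    rw [sub_mul, one_mul, mul_comm Y N, hNY, sub_self]
  -- Freshman's dream modulo p
  have hsY : (p : AddMonoidAlgebra ℤ (ZMod q)) ∣ s - (1 - Y) := by
    have hsplit : range M = insert 0 (Ioo 0 M) := by
      ext j; simp; omega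
    have hexp : s = single ((0:ℕ) • (1 : ZMod q)) ((-1)^(0:ℕ) * (M.choose 0 : ℤ))
        + (∑ j ∈ Ioo 0 M, single (j • (1 : ZMod q)) ((-1)^j * (M.choose j : ℤ)))
        + single (M • (1 : ZMod q)) ((-1)^M * (M.choose M : ℤ)) := by
      rw [hs, ht, hX, aux_expand, Finset.sum_range_succ, hsplit,
        Finset.sum_insert (by simp)]
    have h00 : single ((0:ℕ) • (1 : ZMod q)) ((-1)^(0:ℕ) * (M.choose 0 : ℤ))
        = (1 : AddMonoidAlgebra ℤ (ZMod q)) := by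
      simp [one_def]
    have hMM : M • (1 : ZMod q) = ((M : ZMod q)) := by
      rw [nsmul_eq_mul, mul_one]
    have hseq : s - (1 - Y) = (∑ j ∈ Ioo 0 M, single (j • (1 : ZMod q)) ((-1)^j * (M.choose j : ℤ)))
        + single ((M : ZMod q)) ((-1)^M + 1) := by
      rw [hexp, h00, hMM, Nat.choose_self]
      rw [show ((-1:ℤ)^M * ((1:ℕ):ℤ)) = (-1:ℤ)^M by push_cast; ring]
      rw [single_add, hY]
      ring
    rw [hseq]
    apply dvd_add
    · refine Finset.dvd_sum fun j hj => ?_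
      simp only [Finset.mem_Ioo] at hj
      refine dvd_single' p _ _ ?_
      have hpc : p ∣ M.choose j := by
        rw [hM]
        exact hp.dvd_choose_pow (by omega) (by omega)
      exact Dvd.dvd.mul_left (Int.natCast_dvd_natCast.mpr hpc) _
    · rcases Nat.even_or_odd M with hev | hod
      · have hp2 : p = 2 := hp.even_iff.mp ((Nat.even_pow.mp (hM ▸ hev)).1)
        refine dvd_single' p _ _ ?_
        rw [hev.neg_one_pow, hp2]
        norm_num
      · rw [hod.neg_one_pow, neg_add_cancel, single_zero]
        exact dvd_zero _
  obtain ⟨a, ha⟩ := hsY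
  have hsa : s = (1 - Y) + (p : AddMonoidAlgebra ℤ (ZMod q)) * a := by
    linear_combination ha
  -- (1-Y)^(p-1) ≡ N mod p
  have hNpow : (p : AddMonoidAlgebra ℤ (ZMod q)) ∣ (1 - Y) ^ (p - 1) - N := by
    have hexp : (1 - Y) ^ (p-1)
        = ∑ j ∈ range p, single (j • ((M : ZMod q))) ((-1)^j * ((p-1).choose j : ℤ)) := by
      rw [hY, aux_expand, show p - 1 + 1 = p from Nat.succ_pred_eq_of_pos hp.pos]
    have hNexp : N = ∑ j ∈ range p, single (j • ((M : ZMod q))) (1:ℤ) := by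
      rw [hN]
      refine Finset.sum_congr rfl fun k _ => ?_
      rw [hY, single_pow, one_pow]
    rw [hexp, hNexp, ← Finset.sum_sub_distrib]
    refine Finset.dvd_sum fun j hj => ?_
    rw [single_sub']
    refine dvd_single' p _ _ ?_
    simp only [Finset.mem_range] at hj
    have hcj := choose_sub_one_int p hp j hj
    have hsq : ((-1:ℤ)^j) * ((-1:ℤ)^j) = 1 := by
      rw [← pow_add]
      exact Even.neg_one_pow ⟨j, by ring⟩
    have : (-1:ℤ)^j * (((p-1).choose j : ℤ) - (-1)^j) = (-1)^j * ((p-1).choose j : ℤ) - 1 := by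
      rw [mul_sub, hsq]
    calc (p:ℤ) ∣ (-1:ℤ)^j * (((p-1).choose j : ℤ) - (-1)^j) := hcj.mul_left _
    _ = (-1)^j * ((p-1).choose j : ℤ) - 1 := this
  have hspN : ∃ c, s ^ (p-1) = N + (p : AddMonoidAlgebra ℤ (ZMod q)) * c := by
    have h1 : (p : AddMonoidAlgebra ℤ (ZMod q)) ∣ s ^ (p-1) - (1 - Y) ^ (p-1) :=
      dvd_trans ⟨a, ha⟩ (sub_dvd_pow_sub_pow _ _ _)
    have h2 := dvd_add h1 hNpow
    rw [sub_add_sub_cancel] at h2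
    obtain ⟨c, hc⟩ := h2
    exact ⟨c, by linear_combination hc⟩
  obtain ⟨c, hc⟩ := hspN
  -- the key induction
  have key : ∀ b : ℕ, ∃ u v : AddMonoidAlgebra ℤ (ZMod q),
      s ^ (b * (p-1) + 1) = (p : AddMonoidAlgebra ℤ (ZMod q)) ^ b * u
        ∧ u * N = (p : AddMonoidAlgebra ℤ (ZMod q)) * (v * N) := by
    intro b
    induction b with
    | zero =>
      refine ⟨s, a, by rw [zero_mul, zero_add, pow_one, pow_zero, one_mul], ?_⟩
      linear_combination N * hsa + h1YN
    | succ b ih =>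
      obtain ⟨u, v, h1, h2⟩ := ih
      refine ⟨v * N + u * c, v + c * v, ?_, ?_⟩
      · have hexp : (b+1) * (p-1) + 1 = (b * (p-1) + 1) + (p-1) := by ring
        rw [hexp, pow_add, h1, hc, pow_succ]
        linear_combination ((p : AddMonoidAlgebra ℤ (ZMod q)) ^ b) * h2
      · linear_combination v * hNN + c * h2
  obtain ⟨u, v, h1, _⟩ := key β
  have hts : t ^ δ = s ^ (β * (p-1) + 1) * t ^ (δ - (β * (p-1) + 1) * M) := by
    rw [hs, ← pow_mul, ← pow_add, Nat.mul_comm M]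
    congr 1
    omega
  rw [hts, h1]
  exact dvd_mul_of_dvd_left (dvd_mul_right _ _) _

/-- Generalized Fleck divisibility: if `δ ≥ (β(p−1)+1)·p^{α−1}` then `p^β` divides
`coChoose_{p^α}(δ, x)` for every integer `x`. -/
theorem stmt_8 (p : ℕ) (hp : p.Prime) (α : ℕ) (hα : 1 ≤ α) (β : ℕ) (δ : ℕ)
    (hδ : (β * (p - 1) + 1) * p ^ (α - 1) ≤ δ) :
    ∀ x : ℤ, (p : ℤ) ^ β ∣ coChoose (p ^ α) δ x := by
  intro x
  rw [aux_coeff]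
  obtain ⟨w, hw⟩ := aux_main p hp α hα β δ hδ
  rw [hw]
  have hcast : ((p : AddMonoidAlgebra ℤ (ZMod (p ^ α))) ^ β)
      = single (0 : ZMod (p ^ α)) (((p ^ β : ℕ) : ℤ)) := by
    rw [← Nat.cast_pow, natCast_def]
  rw [hcast, AddMonoidAlgebra.coeff_single_zero_mul]
  have h2 : (((p ^ β : ℕ) : ℤ)) = (p : ℤ) ^ β := by push_cast; ring
  rw [h2]
  exact dvd_mul_right _ _
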